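/- (C-bound with self-labeling) Let ρ be a probability measure on a set H of voters with bounded measurable evaluations, let P_T be a probability measure on X × {-1,+1} with X-marginal D_T, and let l : X → {-1,+1} be a measurable self-labeling function such that ν₁ = ∫_X l(x)·(∫_H h(x) dρ(h)) dD_T(x) > 0. Then the target risk of the ρ-weighted majority vote satisfies P_T[{(x,y) : y·∫_H h(x) dρ(h) ≤ 0}] ≤ 1 − ν₁² / μ₂ + (1/2)∫_{X×Y} |y − l(x)| dP_T(x,y), where μ₂ = ∫_{H×H} (∫_X h(x)h'(x) dD_T(x)) d(ρ⊗ρ)(h,h'). -/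

import Mathlib

open MeasureTheory

/-- Cantelli / Chebyshev type bound: for a bounded random variable `M` with positive mean,
the probability that `M ≤ 0` is at most `1 - (E M)^2 / E (M^2)`. -/
lemma cantelli_zero {X : Type*} [MeasurableSpace X] (μ : Measure X) [IsProbabilityMeasure μ]
    (M : X → ℝ) (hM : Measurable M) (hMb : ∀ x, |M x| ≤ 1)
    (hpos : 0 < ∫ x, M x ∂μ) :
    (μ {x | M x ≤ 0}).toReal ≤ 1 - (∫ x, M x ∂μ) ^ 2 / (∫ x, M x ^ 2 ∂μ) := by
  set S : Set X := {x | 0 < M x} with hS_def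
  have hS : MeasurableSet S := measurableSet_lt measurable_const hM
  have hMint : Integrable M μ :=
    ⟨hM.aestronglyMeasurable, HasFiniteIntegral.of_bounded (C := 1)
      (Filter.Eventually.of_forall fun x => by simpa using hMb x)⟩
  -- ν ≤ ∫_S M
  have h1 : ∫ x, M x ∂μ ≤ ∫ x in S, M x ∂μ := by
    have hadd := integral_add_compl hS hMint
    have h2 : ∫ x in Sᶜ, M x ∂μ ≤ 0 :=
      setIntegral_nonpos hS.compl (fun x hx => not_lt.mp hx)
    linarith
  -- Cauchy-Schwarz
  have hpq : Real.HolderConjugate 2 2 := Real.HolderConjugate.two_two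
  have hMmem : MemLp M (ENNReal.ofReal 2) μ :=
    MemLp.of_bound hM.aestronglyMeasurable 1
      (Filter.Eventually.of_forall fun x => by simpa using hMb x)
  have hImeas : Measurable (S.indicator (1 : X → ℝ)) := measurable_one.indicator hS
  have hImem : MemLp (S.indicator (1 : X → ℝ)) (ENNReal.ofReal 2) μ :=
    MemLp.of_bound hImeas.aestronglyMeasurable 1
      (Filter.Eventually.of_forall fun x => by
        by_cases hx : x ∈ S <;> simp [Set.indicator_of_mem, Set.indicator_of_notMem, hx])
  have hCS := integral_mul_norm_le_Lp_mul_Lq hpq hMmem hImem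
  have hRint : Integrable (fun a => ‖M a‖ * ‖S.indicator (1 : X → ℝ) a‖) μ :=
    ⟨(hM.norm.mul hImeas.norm).aestronglyMeasurable,
      HasFiniteIntegral.of_bounded (C := 1) (Filter.Eventually.of_forall fun x => by
        by_cases hx : x ∈ S <;>
          simp [Set.indicator_of_mem, Set.indicator_of_notMem, hx, abs_mul, abs_abs, hMb x])⟩
  have h3 : ∫ x in S, M x ∂μ ≤ ∫ a, ‖M a‖ * ‖S.indicator (1 : X → ℝ) a‖ ∂μ := by
    rw [← integral_indicator hS]
    refine integral_mono (hMint.indicator hS) hRint (fun x => ?_)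
    by_cases hx : x ∈ S
    · simp only [Set.indicator_of_mem hx, Pi.one_apply, norm_one, mul_one, Real.norm_eq_abs]
      exact le_abs_self _
    · simp [Set.indicator_of_notMem hx]
  -- rewrite the two L2 norms
  have e1 : ∫ a, ‖M a‖ ^ (2 : ℝ) ∂μ = ∫ a, M a ^ 2 ∂μ := by
    refine integral_congr_ae (Filter.Eventually.of_forall fun a => ?_)
    show ‖M a‖ ^ (2 : ℝ) = M a ^ 2
    rw [Real.norm_eq_abs, show (2 : ℝ) = ((2 : ℕ) : ℝ) by norm_num, Real.rpow_natCast, sq_abs]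
  have e2 : ∫ a, ‖S.indicator (1 : X → ℝ) a‖ ^ (2 : ℝ) ∂μ = (μ S).toReal := by
    rw [← measureReal_def, ← integral_indicator_one hS]
    refine integral_congr_ae (Filter.Eventually.of_forall fun a => ?_)
    show ‖S.indicator (1 : X → ℝ) a‖ ^ (2 : ℝ) = S.indicator (1 : X → ℝ) a
    by_cases hx : a ∈ S
    · simp [Set.indicator_of_mem hx]
    · simp [Set.indicator_of_notMem hx, Real.zero_rpow (by norm_num : (2:ℝ) ≠ 0)]
  rw [e1, e2] at hCS
  set ν : ℝ := ∫ x, M x ∂μ with hν_def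
  set a : ℝ := ∫ x, M x ^ 2 ∂μ with ha_def
  set b : ℝ := (μ S).toReal with hb_def
  have ha0 : 0 ≤ a := integral_nonneg fun x => sq_nonneg _
  have hb0 : 0 ≤ b := ENNReal.toReal_nonneg
  have hb1 : b ≤ 1 := by
    have hle : μ S ≤ 1 := prob_le_one
    simpa [hb_def] using ENNReal.toReal_mono ENNReal.one_ne_top hle
  have hν : ν ≤ a ^ (1 / 2 : ℝ) * b ^ (1 / 2 : ℝ) := le_trans (le_trans h1 h3) hCS
  have ea : (a ^ (1 / 2 : ℝ)) ^ 2 = a := by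
    rw [← Real.rpow_natCast (a ^ (1 / 2 : ℝ)) 2, ← Real.rpow_mul ha0]
    norm_num
  have eb : (b ^ (1 / 2 : ℝ)) ^ 2 = b := by
    rw [← Real.rpow_natCast (b ^ (1 / 2 : ℝ)) 2, ← Real.rpow_mul hb0]
    norm_num
  have hsq : ν ^ 2 ≤ a * b := by
    have := pow_le_pow_left₀ hpos.le hν 2
    rwa [mul_pow, ea, eb] at this
  have hν2 : 0 < ν ^ 2 := pow_pos hpos 2
  have ha_pos : 0 < a := by nlinarith
  have hcompl : {x | M x ≤ 0} = Sᶜ := by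
    ext x; simp [hS_def, not_lt]
  have hμc : (μ Sᶜ).toReal = 1 - b := by
    rw [measure_compl hS (measure_ne_top _ _), measure_univ,
      ENNReal.toReal_sub_of_le prob_le_one ENNReal.one_ne_top]
    simp [hb_def]
  have hdiv : ν ^ 2 / a ≤ b := (div_le_iff₀ ha_pos).mpr (by nlinarith)
  rw [hcompl, hμc]
  linarith

/-- C-bound with self-labeling for an abstract vote function `g`. -/
lemma c_bound_aux {X : Type*} [MeasurableSpace X]
    (PT : Measure (X × ℝ)) [IsProbabilityMeasure PT]
    (g : X → ℝ) (hg : Measurable g) (hgb : ∀ x, |g x| ≤ 1)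
    (hY : ∀ᵐ p ∂PT, p.2 = 1 ∨ p.2 = -1)
    (l : X → ℝ) (hl : Measurable l) (hlY : ∀ x, l x = 1 ∨ l x = -1)
    (hpos : 0 < ∫ x, l x * g x ∂(PT.map Prod.fst)) :
    (PT {p : X × ℝ | p.2 * g p.1 ≤ 0}).toReal ≤
      1 - (∫ x, l x * g x ∂(PT.map Prod.fst)) ^ 2 /
          (∫ x, g x ^ 2 ∂(PT.map Prod.fst)) +
        (1 / 2) * ∫ p, |p.2 - l p.1| ∂PT := by
  set D : Measure X := PT.map Prod.fst with hD_def
  haveI : IsProbabilityMeasure D := Measure.isProbabilityMeasure_map measurable_fst.aemeasurable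
  set M : X → ℝ := fun x => l x * g x with hM_def
  have hM : Measurable M := hl.mul hg
  have hlabs : ∀ x, |l x| = 1 := fun x => by rcases hlY x with h | h <;> simp [h]
  have hMb : ∀ x, |M x| ≤ 1 := fun x => by
    rw [hM_def]; simp only [abs_mul, hlabs x, one_mul]; exact hgb x
  have hMsq : ∀ x, M x ^ 2 = g x ^ 2 := fun x => by
    rw [hM_def]; simp only [mul_pow, ← sq_abs (l x), hlabs x]; ring
  have hcant := cantelli_zero D M hM hMb hpos
  have hMsq_int : ∫ x, M x ^ 2 ∂D = ∫ x, g x ^ 2 ∂D :=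
    integral_congr_ae (Filter.Eventually.of_forall fun x => hMsq x)
  rw [hMsq_int] at hcant
  -- sets
  set A : Set (X × ℝ) := {p : X × ℝ | p.2 * g p.1 ≤ 0} with hA_def
  set B : Set (X × ℝ) := Prod.fst ⁻¹' {x | M x ≤ 0} with hB_def
  set C : Set (X × ℝ) := {p : X × ℝ | p.2 ≠ l p.1} with hC_def
  have hMset : MeasurableSet {x | M x ≤ 0} := measurableSet_le hM measurable_const
  have hCmeas : MeasurableSet C := by
    have h0 : MeasurableSet {p : X × ℝ | p.2 = l p.1} :=
      measurableSet_eq_fun measurable_snd (hl.comp measurable_fst)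
    exact h0.compl
  -- a.e. inclusion A ⊆ B ∪ C
  have hsub : ∀ᵐ p ∂PT, p ∈ A → p ∈ B ∪ C := by
    filter_upwards [hY] with p hp hpA
    by_cases hpl : p.2 = l p.1
    · left
      show l p.1 * g p.1 ≤ 0
      rw [← hpl]
      exact hpA
    · right; exact hpl
  have hle : PT A ≤ PT B + PT C :=
    le_trans (measure_mono_ae hsub) (measure_union_le B C)
  have hPB : PT B = D {x | M x ≤ 0} := by
    rw [hD_def, Measure.map_apply measurable_fst hMset]
  -- deviation term
  have hdev : ∫ p, |p.2 - l p.1| ∂PT = 2 * (PT C).toReal := by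
    have : ∫ p, |p.2 - l p.1| ∂PT = ∫ p, C.indicator (fun _ => (2 : ℝ)) p ∂PT := by
      refine integral_congr_ae ?_
      filter_upwards [hY] with p hp
      by_cases hpl : p.2 = l p.1
      · have : p ∉ C := by simp [hC_def, hpl]
        simp [hpl, Set.indicator_of_notMem this]
      · have hmem : p ∈ C := hpl
        rw [Set.indicator_of_mem hmem]
        rcases hp with h1 | h1 <;> rcases hlY p.1 with h2 | h2 <;>
          simp [h1, h2] at hpl ⊢ <;> norm_num
    rw [this, integral_indicator_const (2 : ℝ) hCmeas, smul_eq_mul, measureReal_def]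
    ring
  -- combine
  have htR : (PT A).toReal ≤ (PT B).toReal + (PT C).toReal := by
    have h := ENNReal.toReal_mono
      (ENNReal.add_ne_top.mpr ⟨measure_ne_top _ _, measure_ne_top _ _⟩) hle
    rwa [ENNReal.toReal_add (measure_ne_top _ _) (measure_ne_top _ _)] at h
  have hPBR : (PT B).toReal ≤ 1 - (∫ x, M x ∂D) ^ 2 / ∫ x, g x ^ 2 ∂D := by
    rw [hPB]; exact hcant
  calc (PT A).toReal ≤ (PT B).toReal + (PT C).toReal := htR
    _ ≤ (1 - (∫ x, M x ∂D) ^ 2 / ∫ x, g x ^ 2 ∂D) + (PT C).toReal := by linarith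
    _ = 1 - (∫ x, M x ∂D) ^ 2 / (∫ x, g x ^ 2 ∂D) + (1 / 2) * (2 * (PT C).toReal) := by ring
    _ = 1 - (∫ x, l x * g x ∂D) ^ 2 / (∫ x, g x ^ 2 ∂D) + (1 / 2) * ∫ p, |p.2 - l p.1| ∂PT := by
        rw [hdev]

/-- C-bound with self-labeling: the target risk of the ρ-weighted majority vote is
bounded by the self-labeled C-bound plus the labeling deviation term. -/
theorem c_bound_self_labeling
    {X H : Type*} [MeasurableSpace X] [MeasurableSpace H]
    (PT : Measure (X × ℝ)) [IsProbabilityMeasure PT]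
    (DT : Measure X) (hDT : PT.map Prod.fst = DT)
    (ρ : Measure H) [IsProbabilityMeasure ρ]
    (f : H → X → ℝ)
    (hmeas : Measurable (fun p : H × X => f p.1 p.2))
    (hbound : ∀ h x, |f h x| ≤ 1)
    (hY : ∀ᵐ p ∂PT, p.2 = 1 ∨ p.2 = -1)
    (l : X → ℝ) (hl : Measurable l) (hlY : ∀ x, l x = 1 ∨ l x = -1)
    (hpos : 0 < ∫ x, l x * ∫ h, f h x ∂ρ ∂DT) :
    (PT {p : X × ℝ | p.2 * ∫ h, f h p.1 ∂ρ ≤ 0}).toReal ≤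
      1 - (∫ x, l x * ∫ h, f h x ∂ρ ∂DT) ^ 2 /
          (∫ q : H × H, (∫ x, f q.1 x * f q.2 x ∂DT) ∂(ρ.prod ρ)) +
        (1 / 2) * ∫ p, |p.2 - l p.1| ∂PT := by
  subst hDT
  set D : Measure X := PT.map Prod.fst with hD_def
  haveI : IsProbabilityMeasure D := Measure.isProbabilityMeasure_map measurable_fst.aemeasurable
  set g : X → ℝ := fun x => ∫ h, f h x ∂ρ with hg_def
  have hg : Measurable g := by
    have h1 : StronglyMeasurable (fun p : X × H => f p.2 p.1) :=
      (hmeas.comp measurable_swap).stronglyMeasurable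
    exact h1.integral_prod_right'.measurable
  have hgb : ∀ x, |g x| ≤ 1 := fun x => by
    have := norm_integral_le_of_norm_le_const (μ := ρ) (f := fun h => f h x) (C := 1)
      (Filter.Eventually.of_forall fun h => by simpa using hbound h x)
    simpa [hg_def] using this
  -- rewrite the second-moment term via Fubini
  have hΦmeas : Measurable (fun z : (H × H) × X => f z.1.1 z.2 * f z.1.2 z.2) := by
    have m1 : Measurable (fun z : (H × H) × X => f z.1.1 z.2) :=
      hmeas.comp (measurable_fst.fst.prodMk measurable_snd)
    have m2 : Measurable (fun z : (H × H) × X => f z.1.2 z.2) :=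
      hmeas.comp (measurable_fst.snd.prodMk measurable_snd)
    exact m1.mul m2
  have hΦint : Integrable (Function.uncurry fun (q : H × H) (x : X) => f q.1 x * f q.2 x)
      ((ρ.prod ρ).prod D) := by
    refine ⟨hΦmeas.aestronglyMeasurable, HasFiniteIntegral.of_bounded (C := 1)
      (Filter.Eventually.of_forall fun z => ?_)⟩
    have := mul_le_one₀ (hbound z.1.1 z.2) (abs_nonneg _) (hbound z.1.2 z.2)
    simpa [Function.uncurry, abs_mul] using this
  have hμ2 : ∫ q : H × H, (∫ x, f q.1 x * f q.2 x ∂D) ∂(ρ.prod ρ) = ∫ x, g x ^ 2 ∂D := by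
    rw [integral_integral_swap hΦint]
    refine integral_congr_ae (Filter.Eventually.of_forall fun x => ?_)
    have := integral_prod_mul (μ := ρ) (ν := ρ) (fun h => f h x) (fun h => f h x)
    simp only [hg_def]
    rw [this, sq]
  rw [hμ2]
  exact c_bound_aux PT g hg hgb hY l hl hlY hpos
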